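/- Every Riemann-Lie algebra is unimodular: if 𝔤 is a real Lie algebra with a positive definite symmetric bilinear form a such that the associated map A satisfies [A_u v, w] + [u, A_w v] = 0 for all u,v,w, then trace(ad_u) = 0 for every u ∈ 𝔤. -/

import Mathlib

/-- Every Riemann-Lie algebra is unimodular: `trace (ad u) = 0` for all `u`. -/
theorem stmt_8 (G : Type*) [LieRing G] [LieAlgebra ℝ G] [FiniteDimensional ℝ G]
    (a : LinearMap.BilinForm ℝ G)
    (hsymm : ∀ u v : G, a u v = a v u)
    (hpos : ∀ u : G, u ≠ 0 → 0 < a u u)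
    (A : G → G → G)
    (hA : ∀ u v w : G, 2 * a (A u v) w = a ⁅u, v⁆ w + a ⁅w, u⁆ v + a ⁅w, v⁆ u)
    (hcompat : ∀ u v w : G, ⁅A u v, w⁆ + ⁅u, A w v⁆ = 0) :
    ∀ u : G, LinearMap.trace ℝ G (LieAlgebra.ad ℝ G u) = 0 := by
  classical
  -- ### Basic facts about the form `a`
  have hnneg : ∀ x : G, 0 ≤ a x x := by
    intro x
    rcases eq_or_ne x 0 with h | h
    · simp [h]
    · exact (hpos x h).le
  have hzero : ∀ x : G, a x x = 0 → x = 0 := by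
    intro x hx
    by_contra h
    exact (hpos x h).ne' hx
  have hAeq : ∀ x y : G, (∀ w : G, a x w = a y w) → x = y := by
    intro x y h
    have h0 : a (x - y) (x - y) = 0 := by
      simp only [map_sub, LinearMap.sub_apply]
      linarith [h x, h y, h (x - y)]
    exact sub_eq_zero.mp (hzero _ h0)
  have hanti : ∀ x y w : G, a ⁅x, y⁆ w = -a ⁅y, x⁆ w := by
    intro x y w
    rw [← lie_skew, map_neg, LinearMap.neg_apply]
  -- ### `A` is skew-symmetric in the last two slots
  have hsk : ∀ u v w : G, a (A u v) w = -a (A u w) v := by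
    intro u v w
    have h1 := hA u v w
    have h2 := hA u w v
    have e1 := hanti u w v
    have e2 := hanti v u w
    have e3 := hanti v w u
    linarith
  -- ### torsion-freeness
  have htor : ∀ u v : G, A u v - A v u = ⁅u, v⁆ := by
    intro u v
    apply hAeq
    intro w
    have h1 := hA u v w
    have h2 := hA v u w
    have e := hanti v u w
    simp only [map_sub, LinearMap.sub_apply]
    linarith
  -- ### bilinearity of `A`
  have addL : ∀ x y v : G, A (x + y) v = A x v + A y v := by
    intro x y v
    apply hAeq
    intro w
    have h1 := hA (x + y) v w
    have h2 := hA x v w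
    have h3 := hA y v w
    simp only [add_lie, lie_add, map_add, LinearMap.add_apply] at h1 ⊢
    linarith
  have smulL : ∀ (c : ℝ) (x v : G), A (c • x) v = c • A x v := by
    intro c x v
    apply hAeq
    intro w
    have h1 := hA (c • x) v w
    have h2 := hA x v w
    simp only [smul_lie, lie_smul, map_smul, LinearMap.smul_apply, smul_eq_mul] at h1 ⊢
    linear_combination h1 / 2 - c / 2 * h2
  have addR : ∀ u x y : G, A u (x + y) = A u x + A u y := by
    intro u x y
    apply hAeq
    intro w
    have h1 := hA u (x + y) w
    have h2 := hA u x w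
    have h3 := hA u y w
    simp only [add_lie, lie_add, map_add, LinearMap.add_apply] at h1 ⊢
    linarith
  have smulR : ∀ (c : ℝ) (u x : G), A u (c • x) = c • A u x := by
    intro c u x
    apply hAeq
    intro w
    have h1 := hA u (c • x) w
    have h2 := hA u x w
    simp only [smul_lie, lie_smul, map_smul, LinearMap.smul_apply, smul_eq_mul] at h1 ⊢
    linear_combination h1 / 2 - c / 2 * h2
  -- ### consequence of the compatibility condition
  have hdia : ∀ u v w : G, ⁅u, A v w⁆ = ⁅v, A u w⁆ := by
    intro u v w
    have h2 : ⁅A v w, u⁆ = -⁅v, A u w⁆ := eq_neg_of_add_eq_zero_left (hcompat v w u)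
    rw [← lie_skew, h2, neg_neg]
  have hstar : ∀ u v w : G, ⁅A u v, w⁆ = -⁅u, A v w⁆ + ⁅u, ⁅v, w⁆⁆ := by
    intro u v w
    have h1 : ⁅A u v, w⁆ = -⁅u, A w v⁆ := eq_neg_of_add_eq_zero_left (hcompat u v w)
    have h2 : A w v = A v w - ⁅v, w⁆ := by
      rw [← htor v w]; abel
    rw [h1, h2, lie_sub]
    abel
  -- ### inner-product space structure coming from `a`
  letI core : InnerProductSpace.Core ℝ G :=
    { inner := fun x y => a x y
      conj_inner_symm := fun x y => by simpa using hsymm y x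
      re_inner_nonneg := fun x => by simpa using hnneg x
      add_left := fun x y w => by simp [map_add, LinearMap.add_apply]
      smul_left := fun x y r => by simp [map_smul, LinearMap.smul_apply, smul_eq_mul]
      definite := fun x hx => hzero x (by simpa using hx) }
  letI : NormedAddCommGroup G := core.toNormedAddCommGroup
  letI : InnerProductSpace ℝ G := InnerProductSpace.ofCore core.toCore
  have hinner : ∀ x y : G, (inner ℝ x y : ℝ) = a x y := fun x y => rfl
  let b := stdOrthonormalBasis ℝ G
  -- trace formula
  have htr : ∀ T : G →ₗ[ℝ] G, LinearMap.trace ℝ G T = ∑ i, a (b i) (T (b i)) := by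
    intro T
    rw [LinearMap.trace_eq_matrix_trace ℝ b.toBasis, Matrix.trace]
    refine Finset.sum_congr rfl fun i _ => ?_
    rw [Matrix.diag_apply, LinearMap.toMatrix_apply, OrthonormalBasis.coe_toBasis,
      OrthonormalBasis.coe_toBasis_repr_apply, OrthonormalBasis.repr_apply_apply]
    exact hinner _ _
  -- the trace character, represented by a vector `z`
  obtain ⟨z, hz⟩ : ∃ z : G, ∀ u : G,
      LinearMap.trace ℝ G (LieAlgebra.ad ℝ G u) = a z u := by
    refine ⟨∑ i, (LinearMap.trace ℝ G (LieAlgebra.ad ℝ G (b i))) • b i, fun u => ?_⟩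
    have hu : ∑ i, a (b i) u • b i = u := by
      rw [show (fun i => a (b i) u • b i) = fun i => b.repr u i • b i from
        funext fun i => by rw [OrthonormalBasis.repr_apply_apply]; rfl]
      exact b.sum_repr u
    calc LinearMap.trace ℝ G (LieAlgebra.ad ℝ G u)
        = LinearMap.trace ℝ G (LieAlgebra.ad ℝ G (∑ i, a (b i) u • b i)) := by rw [hu]
      _ = ∑ i, a (b i) u * LinearMap.trace ℝ G (LieAlgebra.ad ℝ G (b i)) := by
          rw [show LieAlgebra.ad ℝ G (∑ i, a (b i) u • b i)
              = (LieAlgebra.ad ℝ G : G →ₗ[ℝ] Module.End ℝ G) (∑ i, a (b i) u • b i) from rfl,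
            map_sum, map_sum]
          exact Finset.sum_congr rfl fun i _ => by
            rw [map_smul, map_smul, smul_eq_mul]; rfl
      _ = a (∑ i, (LinearMap.trace ℝ G (LieAlgebra.ad ℝ G (b i))) • b i) u := by
          rw [map_sum, LinearMap.sum_apply]
          exact Finset.sum_congr rfl fun i _ => by
            rw [map_smul, LinearMap.smul_apply, smul_eq_mul, mul_comm]
  -- package `A` as linear maps
  obtain ⟨L, hL⟩ : ∃ L : G → (G →ₗ[ℝ] G), ∀ u v : G, L u v = A u v :=
    ⟨fun u =>
      { toFun := A u
        map_add' := addR u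
        map_smul' := fun c x => by simpa using smulR c u x }, fun _ _ => rfl⟩
  obtain ⟨J, hJ⟩ : ∃ J : G →ₗ[ℝ] G, ∀ u : G, J u = A u z :=
    ⟨{ toFun := fun u => A u z
       map_add' := fun x y => addL x y z
       map_smul' := fun c x => by simpa using smulL c x z }, fun _ => rfl⟩
  -- trace identity coming from hstar
  have hE1 : ∀ u v : G, a z (A u v) =
      -(LinearMap.trace ℝ G ((LieAlgebra.ad ℝ G u) ∘ₗ L v)) +
        LinearMap.trace ℝ G ((LieAlgebra.ad ℝ G u) ∘ₗ (LieAlgebra.ad ℝ G v)) := by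
    intro u v
    have hop : (LieAlgebra.ad ℝ G (A u v)) =
        -((LieAlgebra.ad ℝ G u) ∘ₗ L v) +
          (LieAlgebra.ad ℝ G u) ∘ₗ (LieAlgebra.ad ℝ G v) := by
      ext w
      simp only [LinearMap.add_apply, LinearMap.neg_apply, LinearMap.comp_apply,
        LieAlgebra.ad_apply, hL]
      exact hstar u v w
    rw [← hz, hop, map_add, map_neg]
  have hcomm1 : ∀ u v : G,
      LinearMap.trace ℝ G ((LieAlgebra.ad ℝ G u) ∘ₗ L v) =
        LinearMap.trace ℝ G ((LieAlgebra.ad ℝ G v) ∘ₗ L u) := by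
    intro u v
    congr 1
    ext w
    simp only [LinearMap.comp_apply, LieAlgebra.ad_apply, hL]
    exact hdia u v w
  have hcomm2 : ∀ u v : G,
      LinearMap.trace ℝ G ((LieAlgebra.ad ℝ G u) ∘ₗ (LieAlgebra.ad ℝ G v)) =
        LinearMap.trace ℝ G ((LieAlgebra.ad ℝ G v) ∘ₗ (LieAlgebra.ad ℝ G u)) := by
    intro u v
    simpa only [Module.End.mul_eq_comp] using
      LinearMap.trace_mul_comm ℝ (LieAlgebra.ad ℝ G u) (LieAlgebra.ad ℝ G v)
  have hsymA : ∀ u v : G, a z (A u v) = a z (A v u) := by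
    intro u v
    rw [hE1 u v, hE1 v u, hcomm1 u v, hcomm2 u v]
  -- `J` is a symmetric operator
  have Jsym : ∀ u v : G, a (A u z) v = a (A v z) u := by
    intro u v
    have h1 := hsk u z v
    have h2 := hsk v z u
    have h3 := hsymA u v
    have h4 := hsymm (A u v) z
    have h5 := hsymm (A v u) z
    linarith [hsymm z (A u v), hsymm z (A v u)]
  have hAzz : A z z = 0 := by
    apply hAeq
    intro w
    have h1 := Jsym z w
    have h2 := hsk w z z
    simp only [map_zero, LinearMap.zero_apply]
    linarith
  -- `ad z = L z - J` and `(ad z) ∘ J = 0`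
  have hadz : (LieAlgebra.ad ℝ G z : G →ₗ[ℝ] G) = L z - J := by
    ext w
    simp only [LinearMap.sub_apply, LieAlgebra.ad_apply, hL, hJ]
    exact (htor z w).symm
  have hzJ : (LieAlgebra.ad ℝ G z : G →ₗ[ℝ] G) ∘ₗ J = 0 := by
    ext w
    have h := hcompat z z w
    rw [hAzz] at h
    simp only [zero_lie, zero_add] at h
    simp only [LinearMap.comp_apply, LieAlgebra.ad_apply, hJ, LinearMap.zero_apply, h]
  -- trace of `(L z) ∘ J` vanishes (skew ∘ symmetric)
  have htrLzJ : LinearMap.trace ℝ G ((L z) ∘ₗ J) = 0 := by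
    have hswap : LinearMap.trace ℝ G ((L z) ∘ₗ J) +
        LinearMap.trace ℝ G (J ∘ₗ (L z)) = 0 := by
      rw [htr, htr, ← Finset.sum_add_distrib]
      refine Finset.sum_eq_zero fun i _ => ?_
      simp only [LinearMap.comp_apply, hL, hJ]
      have e1 := hsymm (b i) (A z (A (b i) z))
      have e2 := hsk z (A (b i) z) (b i)
      have e3 := hsymm (b i) (A (A z (b i)) z)
      have e4 := Jsym (A z (b i)) (b i)
      have e5 := hsymm (A (b i) z) (A z (b i))
      linarith
    have hc : LinearMap.trace ℝ G ((L z) ∘ₗ J) = LinearMap.trace ℝ G (J ∘ₗ (L z)) := by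
      simpa only [Module.End.mul_eq_comp] using LinearMap.trace_mul_comm ℝ (L z) J
    linarith
  -- hence trace of `J ∘ J` vanishes
  have htrJJ : LinearMap.trace ℝ G (J ∘ₗ J) = 0 := by
    have h0 : (L z) ∘ₗ J - J ∘ₗ J = 0 := by
      have h := hzJ
      rw [hadz, LinearMap.sub_comp] at h
      exact h
    have h1 := congrArg (LinearMap.trace ℝ G) h0
    rw [map_sub, map_zero] at h1
    linarith
  -- therefore `J = 0`
  have hsum : ∑ i, a (A (b i) z) (A (b i) z) = 0 := by
    have h1 : LinearMap.trace ℝ G (J ∘ₗ J) = ∑ i, a (A (b i) z) (A (b i) z) := by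
      rw [htr]
      refine Finset.sum_congr rfl fun i _ => ?_
      simp only [LinearMap.comp_apply, hJ]
      have e1 := hsymm (b i) (A (A (b i) z) z)
      have e2 := Jsym (A (b i) z) (b i)
      linarith
    rw [← h1, htrJJ]
  have hJb : ∀ i, J (b i) = 0 := by
    intro i
    have := (Finset.sum_eq_zero_iff_of_nonneg
      (fun i _ => hnneg (A (b i) z))).mp hsum i (Finset.mem_univ i)
    rw [hJ]
    exact hzero _ this
  have hJ0 : J = 0 := by
    apply b.toBasis.ext
    intro i
    rw [OrthonormalBasis.coe_toBasis]
    simp [hJb i]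
  -- trace of `L z` vanishes (skew)
  have htrLz : LinearMap.trace ℝ G (L z) = 0 := by
    rw [htr]
    refine Finset.sum_eq_zero fun i _ => ?_
    simp only [hL]
    have e1 := hsymm (b i) (A z (b i))
    have e2 := hsk z (b i) (b i)
    linarith
  -- conclude `z = 0`
  have hzz : a z z = 0 := by
    have h := hz z
    rw [hadz, map_sub, hJ0, map_zero, sub_zero, htrLz] at h
    linarith
  have hz0 : z = 0 := hzero z hzz
  intro u
  rw [hz u, hz0]
  simp
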